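/- Let N ≥ 1. Assume w : ℝ^N → ℝ is continuous, positive, radially symmetric with w(x) = φ(|x|) for a strictly decreasing φ, and w(x) → 0 as |x| → ∞. Assume there exists r₀ > 0 such that { x ∈ ℝ^N : μ(w)(x) > (1/2)‖μ(w)‖_∞ } is exactly the open ball B_{r₀}(0). Let ξ : ℝ^N → [0,1] be continuous with ξ ≡ 0 on the ball B_ρ(0) and ξ ≡ 1 on ℝ^N \ B_{2ρ}(0), for some ρ > 0. Then for every y ∈ ℝ^N with |y| ≥ 1 and every R > 2ρ + 1 + r₀, the function Φ(x) := ξ(x) w(x − Ry) satisfies β(Φ) = Ry. -/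

import Mathlib

open MeasureTheory Filter Metric

/-- The local average `μ(u)(x) = |B₁(0)|⁻¹ ∫_{B₁(x)} |u|`. -/
noncomputable def muAvg (N : ℕ) (u : EuclideanSpace ℝ (Fin N) → ℝ)
    (x : EuclideanSpace ℝ (Fin N)) : ℝ :=
  (volume (Metric.ball (0 : EuclideanSpace ℝ (Fin N)) 1)).toReal⁻¹ *
    ∫ z in Metric.ball x 1, |u z|

/-- The sup norm `‖μ(u)‖_∞`. -/
noncomputable def muSup (N : ℕ) (u : EuclideanSpace ℝ (Fin N) → ℝ) : ℝ :=
  ⨆ x, |muAvg N u x|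

/-- The truncation `û(x) = (μ(u)(x) − ‖μ(u)‖_∞ / 2)⁺`. -/
noncomputable def uHat (N : ℕ) (u : EuclideanSpace ℝ (Fin N) → ℝ)
    (x : EuclideanSpace ℝ (Fin N)) : ℝ :=
  max (muAvg N u x - muSup N u / 2) 0

/-- The barycenter `β(u) = (∫ û)⁻¹ ∫ x û(x) dx`. -/
noncomputable def bary (N : ℕ) (u : EuclideanSpace ℝ (Fin N) → ℝ) :
    EuclideanSpace ℝ (Fin N) :=
  (∫ x, uHat N u x)⁻¹ • ∫ x, uHat N u x • x


variable {N : ℕ}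
local notation "E" => EuclideanSpace ℝ (Fin N)

lemma ball_translate_int (f : E → ℝ) (c x : E) (r : ℝ) :
    ∫ z in Metric.ball x r, f (z - c) = ∫ z in Metric.ball (x - c) r, f z := by
  have h := (measurePreserving_add_right (volume : Measure E) c).setIntegral_preimage_emb
    ((MeasurableEquiv.addRight c).measurableEmbedding) (fun z => f (z - c)) (Metric.ball x r)
  have hpre : (· + c) ⁻¹' (Metric.ball x r) = Metric.ball (x - c) r := by
    ext t
    simp [Metric.mem_ball, dist_eq_norm]
  rw [hpre] at h
  simp only [add_sub_cancel_right] at h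
  exact h.symm

lemma ball_neg_int (f : E → ℝ) (x : E) (r : ℝ) :
    ∫ z in Metric.ball (-x) r, f (-z) = ∫ z in Metric.ball x r, f z := by
  have h := (Measure.measurePreserving_neg (volume : Measure E)).setIntegral_preimage_emb
    ((MeasurableEquiv.neg E).measurableEmbedding) f (Metric.ball x r)
  have hpre : (Neg.neg : E → E) ⁻¹' (Metric.ball x r) = Metric.ball (-x) r := by
    ext t
    simp [Metric.mem_ball, dist_eq_norm]
  rw [hpre] at h
  exact h

lemma integrableOn_ball_of_continuous {f : E → ℝ} (hf : Continuous f) (x : E) (r : ℝ) :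
    IntegrableOn f (Metric.ball x r) volume :=
  ((hf.locallyIntegrable).integrableOn_isCompact (isCompact_closedBall x r)).mono_set
    Metric.ball_subset_closedBall

lemma volb_pos : 0 < (volume (Metric.ball (0 : E) 1)).toReal :=
  ENNReal.toReal_pos (ne_of_gt (measure_ball_pos _ _ one_pos)) (measure_ball_lt_top).ne

lemma muAvg_nonneg (u : E → ℝ) (x : E) : 0 ≤ muAvg N u x :=
  mul_nonneg (inv_nonneg.2 ENNReal.toReal_nonneg) (integral_nonneg fun z => abs_nonneg _)

lemma muAvg_le_of_bound {u : E → ℝ} {M : ℝ} (hu : Continuous u) (hM : ∀ z, |u z| ≤ M) (x : E) :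
    muAvg N u x ≤ M := by
  unfold muAvg
  have h1 : ∫ z in Metric.ball x 1, |u z| ≤ M * (volume (Metric.ball x 1)).toReal := by
    have hb := norm_setIntegral_le_of_norm_le_const (f := fun z => |u z|) (s := Metric.ball x 1)
      (μ := volume) (C := M) measure_ball_lt_top (fun z _ => by simpa using hM z)
    exact le_trans (le_abs_self _) hb
  have h2 : volume (Metric.ball x 1) = volume (Metric.ball (0:E) 1) :=
    Measure.addHaar_ball_center volume x 1
  rw [h2] at h1
  calc (volume (Metric.ball (0:E) 1)).toReal⁻¹ * ∫ z in Metric.ball x 1, |u z|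
      ≤ (volume (Metric.ball (0:E) 1)).toReal⁻¹ * (M * (volume (Metric.ball (0:E) 1)).toReal) :=
        mul_le_mul_of_nonneg_left h1 (inv_nonneg.2 ENNReal.toReal_nonneg)
    _ = M := by rw [mul_comm M, ← mul_assoc, inv_mul_cancel₀ volb_pos.ne', one_mul]

lemma muAvg_mono {u v : E → ℝ} (hu : Continuous u) (hv : Continuous v)
    (h : ∀ z, |u z| ≤ |v z|) (x : E) : muAvg N u x ≤ muAvg N v x := by
  unfold muAvg
  refine mul_le_mul_of_nonneg_left ?_ (inv_nonneg.2 ENNReal.toReal_nonneg)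
  exact setIntegral_mono_on (integrableOn_ball_of_continuous hu.abs x 1)
    (integrableOn_ball_of_continuous hv.abs x 1) measurableSet_ball (fun z _ => h z)

lemma muAvg_translate (u : E → ℝ) (c x : E) :
    muAvg N (fun z => u (z - c)) x = muAvg N u (x - c) := by
  unfold muAvg
  congr 1
  exact ball_translate_int (fun z => |u z|) c x 1

lemma muAvg_even {u : E → ℝ} (hsym : ∀ z, u (-z) = u z) (x : E) :
    muAvg N u (-x) = muAvg N u x := by
  unfold muAvg
  congr 1
  rw [← ball_neg_int (fun z => |u z|) x 1]
  simp only [hsym]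

lemma muAvg_continuous {u : E → ℝ} (hu : Continuous u) {M : ℝ} (hM : ∀ z, |u z| ≤ M) :
    Continuous (muAvg N u) := by
  have key : ∀ x : E, ∫ z in Metric.ball x 1, |u z| = ∫ t in Metric.ball (0:E) 1, |u (t + x)| := by
    intro x
    have h := ball_translate_int (fun t => |u (t + x)|) x x 1
    simp only [sub_add_cancel, sub_self] at h
    exact h
  unfold muAvg
  simp only [key]
  refine continuous_const.mul ?_
  refine continuous_of_dominated (bound := fun _ => M) ?_ ?_ ?_ ?_
  · exact fun x => ((hu.abs.comp (continuous_id.add continuous_const)).aestronglyMeasurable)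
  · exact fun x => Eventually.of_forall fun t => by simpa [abs_abs] using hM (t + x)
  · exact integrableOn_const measure_ball_lt_top.ne
  · exact Eventually.of_forall fun t => hu.abs.comp (continuous_const.add continuous_id)

lemma exists_bound {w : E → ℝ} (hwcont : Continuous w)
    (hwlim : Tendsto w (comap (fun x : E => ‖x‖) atTop) (nhds 0)) :
    ∃ M : ℝ, 0 < M ∧ ∀ z, |w z| ≤ M := by
  have h1 : ∀ᶠ x in comap (fun x : E => ‖x‖) atTop, dist (w x) 0 < 1 :=
    Metric.tendsto_nhds.mp hwlim 1 one_pos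
  rw [eventually_comap] at h1
  obtain ⟨A, hA⟩ := h1.exists_forall_of_atTop
  obtain ⟨z₀, _, hz₀⟩ := (isCompact_closedBall (0:E) (max A 0)).exists_isMaxOn
    ⟨0, mem_closedBall_self (le_max_right _ _)⟩ hwcont.abs.continuousOn
  refine ⟨max (|w z₀|) 1, lt_max_of_lt_right one_pos, fun z => ?_⟩
  by_cases hz : ‖z‖ ≤ max A 0
  · exact le_max_of_le_left (hz₀ (by simpa [Metric.mem_closedBall, dist_eq_norm] using hz))
  · push_neg at hz
    have := hA ‖z‖ (le_trans (le_max_left A 0) hz.le) z rfl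
    rw [dist_zero_right] at this
    exact le_max_of_le_right (by simpa using this.le)

theorem stmt19 (N : ℕ) (hN : 1 ≤ N)
    (w : EuclideanSpace ℝ (Fin N) → ℝ) (hwcont : Continuous w) (hwpos : ∀ x, 0 < w x)
    (φ : ℝ → ℝ) (hφrad : ∀ x, w x = φ ‖x‖) (hφanti : StrictAntiOn φ (Set.Ici 0))
    (hwlim : Tendsto w (comap (fun x : EuclideanSpace ℝ (Fin N) => ‖x‖) atTop) (nhds 0))
    (r₀ : ℝ) (hr₀ : 0 < r₀)
    (hlevel : {x : EuclideanSpace ℝ (Fin N) | muSup N w / 2 < muAvg N w x} =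
      Metric.ball (0 : EuclideanSpace ℝ (Fin N)) r₀)
    (ρ : ℝ) (hρ : 0 < ρ)
    (ξ : EuclideanSpace ℝ (Fin N) → ℝ) (hξcont : Continuous ξ)
    (hξ01 : ∀ x, ξ x ∈ Set.Icc (0:ℝ) 1)
    (hξ0 : ∀ x ∈ Metric.ball (0 : EuclideanSpace ℝ (Fin N)) ρ, ξ x = 0)
    (hξ1 : ∀ x ∉ Metric.ball (0 : EuclideanSpace ℝ (Fin N)) (2 * ρ), ξ x = 1) :
    ∀ y : EuclideanSpace ℝ (Fin N), 1 ≤ ‖y‖ → ∀ R : ℝ, 2 * ρ + 1 + r₀ < R →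
      bary N (fun x => ξ x * w (x - R • y)) = R • y := by
  intro y hy R hR
  obtain ⟨M, hMpos, hM⟩ := exists_bound hwcont hwlim
  set c : EuclideanSpace ℝ (Fin N) := R • y with hc
  have hRpos : 0 < R := by nlinarith [hρ, hr₀]
  have hcnorm : 2 * ρ + 1 + r₀ < ‖c‖ := by
    have : ‖c‖ = |R| * ‖y‖ := by rw [hc, norm_smul, Real.norm_eq_abs]
    rw [this, abs_of_pos hRpos]
    nlinarith
  set Φ : EuclideanSpace ℝ (Fin N) → ℝ := fun x => ξ x * w (x - c) with hΦ
  have hΦcont : Continuous Φ := hξcont.mul (hwcont.comp (continuous_id.sub continuous_const))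
  have hΦle : ∀ z, |Φ z| ≤ |w (z - c)| := by
    intro z
    rw [hΦ, abs_mul]
    have h1 := hξ01 z
    calc |ξ z| * |w (z - c)| ≤ 1 * |w (z - c)| := by
          apply mul_le_mul_of_nonneg_right _ (abs_nonneg _)
          rw [abs_of_nonneg h1.1]; exact h1.2
      _ = |w (z - c)| := one_mul _
  have hwshiftcont : Continuous (fun z : EuclideanSpace ℝ (Fin N) => w (z - c)) :=
    hwcont.comp (continuous_id.sub continuous_const)
  -- (1) pointwise inequality of averages
  have hμΦ_le : ∀ x : EuclideanSpace ℝ (Fin N), muAvg N Φ x ≤ muAvg N w (x - c) := by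
    intro x
    calc muAvg N Φ x ≤ muAvg N (fun z => w (z - c)) x :=
          muAvg_mono hΦcont hwshiftcont hΦle x
      _ = muAvg N w (x - c) := muAvg_translate w c x
  -- (2) equality far from the origin
  have hμΦ_eq : ∀ x : EuclideanSpace ℝ (Fin N), 2 * ρ + 1 ≤ ‖x‖ → muAvg N Φ x = muAvg N w (x - c) := by
    intro x hx
    have heq : muAvg N Φ x = muAvg N (fun z => w (z - c)) x := by
      unfold muAvg
      congr 1
      refine setIntegral_congr_fun measurableSet_ball (fun z hz => ?_)
      have hz' : z ∉ Metric.ball (0 : EuclideanSpace ℝ (Fin N)) (2 * ρ) := by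
        rw [Metric.mem_ball, dist_zero_right]
        push_neg
        have h1 : dist z x < 1 := hz
        have h2 : ‖x‖ - ‖z‖ ≤ dist z x := by
          rw [dist_eq_norm]
          calc ‖x‖ - ‖z‖ ≤ ‖x - z‖ := by
                have := norm_sub_norm_le (x) (z); linarith [abs_le.1 (abs_norm_sub_norm_le x z)]
            _ = ‖z - x‖ := by rw [norm_sub_rev]
        linarith
      simp only [hΦ, hξ1 z hz', one_mul]
    rw [heq, muAvg_translate]
  -- bddAbove facts
  have hbdd_w : BddAbove (Set.range fun x : EuclideanSpace ℝ (Fin N) => |muAvg N w x|) := by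
    refine ⟨M, fun t ht => ?_⟩
    obtain ⟨x, rfl⟩ := ht
    simp only [abs_of_nonneg (muAvg_nonneg w x)]
    exact muAvg_le_of_bound hwcont hM x
  have hbdd_Φ : BddAbove (Set.range fun x : EuclideanSpace ℝ (Fin N) => |muAvg N Φ x|) := by
    refine ⟨M, fun t ht => ?_⟩
    obtain ⟨x, rfl⟩ := ht
    simp only [abs_of_nonneg (muAvg_nonneg Φ x)]
    exact le_trans (hμΦ_le x) (muAvg_le_of_bound hwcont hM _)
  set s : ℝ := muSup N w with hs
  have hw_le_s : ∀ z : EuclideanSpace ℝ (Fin N), muAvg N w z ≤ s := by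
    intro z
    exact le_trans (le_abs_self _) (le_ciSup hbdd_w z)
  have hlevel' : ∀ z : EuclideanSpace ℝ (Fin N), s / 2 < muAvg N w z ↔ z ∈ Metric.ball (0:EuclideanSpace ℝ (Fin N)) r₀ := by
    intro z; exact Set.ext_iff.1 hlevel z
  -- positivity of s
  have hμw0_pos : 0 < muAvg N w 0 := by
    unfold muAvg
    refine mul_pos (inv_pos.2 volb_pos) ?_
    rw [setIntegral_pos_iff_support_of_nonneg_ae
      (Eventually.of_forall fun z => abs_nonneg (w z))
      (integrableOn_ball_of_continuous hwcont.abs 0 1)]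
    have : Function.support (fun z : EuclideanSpace ℝ (Fin N) => |w z|) = Set.univ := by
      ext z; simp [abs_ne_zero, (hwpos z).ne']
    rw [this, Set.univ_inter]
    exact measure_ball_pos _ _ one_pos
  have hs_pos : 0 < s := lt_of_lt_of_le hμw0_pos (hw_le_s 0)
  -- far from level set the average is small
  have hsmall : ∀ z : EuclideanSpace ℝ (Fin N), z ∉ Metric.ball (0:EuclideanSpace ℝ (Fin N)) r₀ → muAvg N w z ≤ s / 2 := by
    intro z hz
    by_contra h
    exact hz ((hlevel' z).1 (lt_of_not_ge h))
  -- (6) muSup of Φ equals s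
  have hμΦ_eq' : ∀ z : EuclideanSpace ℝ (Fin N), z ∈ Metric.ball (0:EuclideanSpace ℝ (Fin N)) r₀ → muAvg N Φ (z + c) = muAvg N w z := by
    intro z hz
    rw [Metric.mem_ball, dist_zero_right] at hz
    have hnorm : 2 * ρ + 1 ≤ ‖z + c‖ := by
      have h1 : ‖c‖ ≤ ‖z + c‖ + ‖z‖ := by
        calc ‖c‖ = ‖(z + c) - z‖ := by congr 1; abel
          _ ≤ ‖z + c‖ + ‖z‖ := norm_sub_le _ _
      linarith
    have := hμΦ_eq (z + c) hnorm
    rwa [add_sub_cancel_right] at this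
  have hsupΦ : muSup N Φ = s := by
    apply le_antisymm
    · refine ciSup_le fun x => ?_
      simp only [abs_of_nonneg (muAvg_nonneg Φ x)]
      exact le_trans (hμΦ_le x) (hw_le_s _)
    · set t : ℝ := muSup N Φ with ht
      have hkey : ∀ z : EuclideanSpace ℝ (Fin N), muAvg N w z ≤ max t (s / 2) := by
        intro z
        by_cases hz : z ∈ Metric.ball (0:EuclideanSpace ℝ (Fin N)) r₀
        · refine le_max_of_le_left ?_
          rw [← hμΦ_eq' z hz, ← abs_of_nonneg (muAvg_nonneg Φ (z + c))]
          exact le_ciSup hbdd_Φ (z + c)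
        · exact le_max_of_le_right (hsmall z hz)
      have : s ≤ max t (s / 2) := by
        refine ciSup_le fun x => ?_
        simp only [abs_of_nonneg (muAvg_nonneg w x)]
        exact hkey x
      rcases le_max_iff.1 this with h | h
      · exact h
      · linarith
  -- (7) uHat of Φ is the translate of uHat of w
  have hHat : ∀ x, uHat N Φ x = uHat N w (x - c) := by
    intro x
    unfold uHat
    rw [hsupΦ, ← hs]
    by_cases hx : x - c ∈ Metric.ball (0:EuclideanSpace ℝ (Fin N)) r₀
    · have hxnorm : 2 * ρ + 1 ≤ ‖x‖ := by
        rw [Metric.mem_ball, dist_zero_right] at hx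
        have h1 : ‖c‖ ≤ ‖x‖ + ‖x - c‖ := by
          calc ‖c‖ = ‖x - (x - c)‖ := by congr 1; abel
            _ ≤ ‖x‖ + ‖x - c‖ := norm_sub_le _ _
        linarith
      rw [hμΦ_eq x hxnorm]
    · have h1 : muAvg N w (x - c) ≤ s / 2 := hsmall _ hx
      have h2 : muAvg N Φ x ≤ s / 2 := le_trans (hμΦ_le x) h1
      rw [max_eq_right (by linarith), max_eq_right (by linarith)]
  -- properties of uHat N w
  have hWcont : Continuous (uHat N w) := by
    have : Continuous (muAvg N w) := muAvg_continuous hwcont hM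
    exact (this.sub continuous_const).max continuous_const
  have hWnonneg : ∀ x, 0 ≤ uHat N w x := fun x => le_max_right _ _
  have hW_supp : ∀ x : EuclideanSpace ℝ (Fin N), x ∉ Metric.ball (0:EuclideanSpace ℝ (Fin N)) r₀ → uHat N w x = 0 := by
    intro x hx
    unfold uHat
    rw [← hs]
    exact max_eq_right (by linarith [hsmall x hx])
  have hWcs : HasCompactSupport (uHat N w) :=
    HasCompactSupport.intro (isCompact_closedBall (0:EuclideanSpace ℝ (Fin N)) r₀)
      (fun x hx => hW_supp x (fun h => hx (Metric.ball_subset_closedBall h)))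
  have hWint : Integrable (uHat N w) := hWcont.integrable_of_hasCompactSupport hWcs
  have hWxint : Integrable (fun x : EuclideanSpace ℝ (Fin N) => uHat N w x • x) := by
    refine (hWcont.smul continuous_id).integrable_of_hasCompactSupport ?_
    exact HasCompactSupport.intro (isCompact_closedBall (0:EuclideanSpace ℝ (Fin N)) r₀)
      (fun x hx => by show uHat N w x • x = 0; rw [hW_supp x (fun h => hx (Metric.ball_subset_closedBall h)), zero_smul])
  have hWpos : 0 < ∫ x, uHat N w x := by
    rw [integral_pos_iff_support_of_nonneg hWnonneg hWint]
    refine lt_of_lt_of_le (measure_ball_pos volume (0:EuclideanSpace ℝ (Fin N)) hr₀) (measure_mono ?_)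
    intro x hx
    have hlt : s / 2 < muAvg N w x := (hlevel' x).2 hx
    have hpos : 0 < uHat N w x := by
      unfold uHat; rw [← hs]; exact lt_max_iff.2 (Or.inl (by linarith))
    exact Function.mem_support.2 hpos.ne'
  -- symmetry
  have hweven : ∀ z : EuclideanSpace ℝ (Fin N), w (-z) = w z := by
    intro z; rw [hφrad, hφrad, norm_neg]
  have hWeven : ∀ z : EuclideanSpace ℝ (Fin N), uHat N w (-z) = uHat N w z := by
    intro z; unfold uHat; rw [muAvg_even hweven z]
  have hWodd : ∫ x, uHat N w x • x = 0 := by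
    have h1 := integral_neg_eq_self (fun z : EuclideanSpace ℝ (Fin N) => uHat N w z • z) volume
    simp only [hWeven, smul_neg] at h1
    rw [integral_neg] at h1
    have h2 : (∫ x, uHat N w x • x) + ∫ x, uHat N w x • x = 0 := by
      nth_rewrite 1 [← h1]
      abel
    have h3 : (2:ℝ) • ∫ x, uHat N w x • x = 0 := by rw [two_smul]; exact h2
    exact (smul_eq_zero.1 h3).resolve_left two_ne_zero
  -- conclusion
  show bary N Φ = c
  unfold bary
  simp only [hHat]
  have hint1 : ∫ x, uHat N w (x - c) = ∫ x, uHat N w x :=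
    integral_sub_right_eq_self (uHat N w) c
  have hint2 : (∫ x : EuclideanSpace ℝ (Fin N), uHat N w (x - c) • x) = (∫ x, uHat N w x) • c := by
    have h0 := integral_add_right_eq_self (μ := volume) (fun x : EuclideanSpace ℝ (Fin N) => uHat N w (x - c) • x) c
    simp only [add_sub_cancel_right] at h0
    rw [← h0]
    have : (fun x : EuclideanSpace ℝ (Fin N) => uHat N w x • (x + c)) = fun x => uHat N w x • x + uHat N w x • c := by
      funext x; rw [smul_add]
    rw [this, integral_add hWxint (hWint.smul_const c), hWodd, zero_add, integral_smul_const]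
  rw [hint1, hint2, smul_smul, inv_mul_cancel₀ hWpos.ne', one_smul]
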